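/- Let r and r' be i.i.d. random vectors in ℝ^n whose components r_j − μ_j are σ_j-subgaussian, and let X ∈ {1,…,n} be a random index depending only on r (independent of r'). Then E[|r_X − r'_X|] ≤ (1 + sqrt(2 log(2n) + 2)) · sqrt(E[σ_X²]). -/

import Mathlib

open MeasureTheory BigOperators
open Filter Set
open scoped ENNReal

lemma aux_cosh_quad (x : ℝ) : 1 + x ^ 2 / 2 ≤ Real.cosh x := by
  have h1 : Real.cosh x = 2 * Real.sinh (x / 2) ^ 2 + 1 := by
    have := Real.cosh_two_mul (x / 2)
    have h2 := Real.cosh_sq (x / 2)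
    rw [show 2 * (x / 2) = x by ring] at this
    rw [this, h2]; ring
  have h2 : (x / 2) ^ 2 ≤ Real.sinh (x / 2) ^ 2 := by
    rw [← sq_abs (x / 2), ← sq_abs (Real.sinh (x / 2))]
    apply pow_le_pow_left₀ (abs_nonneg _)
    rw [Real.abs_sinh]
    exact Real.self_le_sinh_iff.mpr (abs_nonneg _)
  nlinarith [h2]

lemma aux_sq_moment {Ω : Type*} [MeasurableSpace Ω] (μ : Measure Ω) [IsProbabilityMeasure μ]
    (Y : Ω → ℝ) (s : ℝ) (hs : 0 < s)
    (hint : ∀ l : ℝ, Integrable (fun ω => Real.exp (l * Y ω)) μ)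
    (hsg : ∀ l : ℝ, ∫ ω, Real.exp (l * Y ω) ∂μ ≤ Real.exp (l ^ 2 * s ^ 2 / 2)) :
    ∫⁻ ω, ENNReal.ofReal ((Y ω / s) ^ 2) ∂μ ≤ 1 := by
  set M := ∫⁻ ω, ENNReal.ofReal ((Y ω / s) ^ 2) ∂μ with hM
  -- step: for every lam > 0, M ≤ ofReal ((exp (lam^2/2) - 1) / (lam^2/2))
  have key : ∀ lam : ℝ, 0 < lam →
      M ≤ ENNReal.ofReal ((Real.exp (lam ^ 2 / 2) - 1) / (lam ^ 2 / 2)) := by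
    intro lam hlam
    set l : ℝ := lam / s with hl
    have hcosh_eq : (fun ω => Real.cosh (lam * (Y ω / s)))
        = fun ω => (Real.exp (l * Y ω) + Real.exp (-l * Y ω)) / 2 := by
      funext ω
      rw [Real.cosh_eq]
      have : lam * (Y ω / s) = l * Y ω := by rw [hl]; field_simp; try ring
      rw [this, neg_mul]
    have hcosh_int : Integrable (fun ω => Real.cosh (lam * (Y ω / s))) μ := by
      rw [hcosh_eq]
      exact ((hint l).add (hint (-l))).div_const 2
    have hcosh_bound : ∫ ω, Real.cosh (lam * (Y ω / s)) ∂μ ≤ Real.exp (lam ^ 2 / 2) := by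
      rw [hcosh_eq]
      rw [integral_div, integral_add (hint l) (hint (-l))]
      have h1 := hsg l
      have h2 := hsg (-l)
      have hls : l ^ 2 * s ^ 2 / 2 = lam ^ 2 / 2 := by
        rw [hl, div_pow, div_mul_cancel₀ _ (by positivity)]
      rw [hls] at h1
      rw [show (-l) ^ 2 * s ^ 2 / 2 = lam ^ 2 / 2 by rw [hl]; field_simp; try ring] at h2
      linarith
    -- pointwise
    have hpt : ∀ ω, (1 : ℝ≥0∞) + ENNReal.ofReal (lam ^ 2 / 2) * ENNReal.ofReal ((Y ω / s) ^ 2)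
        ≤ ENNReal.ofReal (Real.cosh (lam * (Y ω / s))) := by
      intro ω
      have := aux_cosh_quad (lam * (Y ω / s))
      have hrw : (lam * (Y ω / s)) ^ 2 / 2 = lam ^ 2 / 2 * (Y ω / s) ^ 2 := by ring
      rw [hrw] at this
      calc (1 : ℝ≥0∞) + ENNReal.ofReal (lam ^ 2 / 2) * ENNReal.ofReal ((Y ω / s) ^ 2)
          = ENNReal.ofReal (1 + lam ^ 2 / 2 * (Y ω / s) ^ 2) := by
            rw [ENNReal.ofReal_add (by norm_num) (by positivity), ENNReal.ofReal_one,
              ENNReal.ofReal_mul (by positivity)]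
        _ ≤ _ := ENNReal.ofReal_le_ofReal this
    have hlin : (1 : ℝ≥0∞) + ENNReal.ofReal (lam ^ 2 / 2) * M
        ≤ ENNReal.ofReal (Real.exp (lam ^ 2 / 2)) := by
      have h0 : ∫⁻ ω, ((1 : ℝ≥0∞) + ENNReal.ofReal (lam ^ 2 / 2) * ENNReal.ofReal ((Y ω / s) ^ 2)) ∂μ
          ≤ ∫⁻ ω, ENNReal.ofReal (Real.cosh (lam * (Y ω / s))) ∂μ := lintegral_mono hpt
      rw [lintegral_add_left measurable_const, lintegral_const_mul' _ _ ENNReal.ofReal_ne_top,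
        lintegral_const, measure_univ, mul_one] at h0
      refine h0.trans ?_
      rw [← ofReal_integral_eq_lintegral_ofReal hcosh_int
        (Filter.Eventually.of_forall fun ω => (Real.one_le_cosh _).trans' (by norm_num))]
      exact ENNReal.ofReal_le_ofReal hcosh_bound
    -- rearrange
    have hu : (0:ℝ) < lam ^ 2 / 2 := by positivity
    have h1 : ENNReal.ofReal (lam ^ 2 / 2) * M
        ≤ ENNReal.ofReal (Real.exp (lam ^ 2 / 2)) - 1 := by
      exact ENNReal.le_sub_of_add_le_left ENNReal.one_ne_top hlin
    have h2 : ENNReal.ofReal (Real.exp (lam ^ 2 / 2)) - 1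
        = ENNReal.ofReal (lam ^ 2 / 2) * ENNReal.ofReal ((Real.exp (lam ^ 2 / 2) - 1) / (lam ^ 2 / 2)) := by
      rw [← ENNReal.ofReal_one, ← ENNReal.ofReal_sub _ (by norm_num),
        ← ENNReal.ofReal_mul (le_of_lt hu)]
      congr 1
      field_simp
    rw [h2] at h1
    rwa [ENNReal.mul_le_mul_iff_right (by simp [ENNReal.ofReal_eq_zero]; linarith) ENNReal.ofReal_ne_top] at h1
  -- limit lam -> 0+
  have hslope : Tendsto (fun u : ℝ => (Real.exp u - 1) / u) (nhdsWithin 0 {(0:ℝ)}ᶜ) (nhds 1) := by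
    have := hasDerivAt_iff_tendsto_slope.mp (Real.hasDerivAt_exp 0)
    simp only [slope_fun_def_field, Real.exp_zero, sub_zero] at this
    exact this
  have hcomp : Tendsto (fun lam : ℝ => lam ^ 2 / 2) (nhdsWithin 0 (Set.Ioi 0)) (nhdsWithin 0 {(0:ℝ)}ᶜ) := by
    apply tendsto_nhdsWithin_of_tendsto_nhds_of_eventually_within
    · have : ContinuousAt (fun lam : ℝ => lam ^ 2 / 2) 0 := by fun_prop
      have h : Tendsto (fun lam : ℝ => lam ^ 2 / 2) (nhdsWithin 0 (Set.Ioi 0)) (nhds ((0:ℝ) ^ 2 / 2)) :=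
        this.tendsto.mono_left nhdsWithin_le_nhds
      simpa using h
    · filter_upwards [self_mem_nhdsWithin] with lam hlam
      simp only [Set.mem_compl_iff, Set.mem_singleton_iff]
      have : (0:ℝ) < lam := hlam
      positivity
  have htend : Tendsto (fun lam : ℝ => ENNReal.ofReal ((Real.exp (lam ^ 2 / 2) - 1) / (lam ^ 2 / 2)))
      (nhdsWithin 0 (Set.Ioi 0)) (nhds 1) := by
    have := (ENNReal.continuous_ofReal.tendsto 1).comp (hslope.comp hcomp)
    simpa [Function.comp_def] using this
  exact ge_of_tendsto htend (by
    filter_upwards [self_mem_nhdsWithin] with lam hlam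
    exact key lam hlam)

lemma aux_tail{Ω : Type*} [MeasurableSpace Ω] (μ : Measure Ω) [IsProbabilityMeasure μ]
    (Y : Ω → ℝ) (s : ℝ) (hs : 0 < s)
    (hint : ∀ l : ℝ, Integrable (fun ω => Real.exp (l * Y ω)) μ)
    (hsg : ∀ l : ℝ, ∫ ω, Real.exp (l * Y ω) ∂μ ≤ Real.exp (l ^ 2 * s ^ 2 / 2))
    (t : ℝ) (ht : 0 < t) :
    μ {ω | t ≤ |Y ω| / s} ≤ ENNReal.ofReal (2 * Real.exp (-t ^ 2 / 2)) := by
  have hone : ∀ (W : Ω → ℝ), (∀ l : ℝ, Integrable (fun ω => Real.exp (l * W ω)) μ) →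
      (∀ l : ℝ, ∫ ω, Real.exp (l * W ω) ∂μ ≤ Real.exp (l ^ 2 * s ^ 2 / 2)) →
      μ {ω | t * s ≤ W ω} ≤ ENNReal.ofReal (Real.exp (-t ^ 2 / 2)) := by
    intro W hWint hWsg
    have hl : (0:ℝ) ≤ t / s := by positivity
    have h := ProbabilityTheory.measure_ge_le_exp_mul_mgf (X := W) (μ := μ) (t := t / s)
      (t * s) hl (hWint (t / s))
    have hmgf : ProbabilityTheory.mgf W μ (t / s) ≤ Real.exp ((t / s) ^ 2 * s ^ 2 / 2) :=
      hWsg (t / s)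
    have hb : Real.exp (-(t / s) * (t * s)) * ProbabilityTheory.mgf W μ (t / s)
        ≤ Real.exp (-t ^ 2 / 2) := by
      have h0 : (0:ℝ) < Real.exp (-(t / s) * (t * s)) := Real.exp_pos _
      calc Real.exp (-(t / s) * (t * s)) * ProbabilityTheory.mgf W μ (t / s)
          ≤ Real.exp (-(t / s) * (t * s)) * Real.exp ((t / s) ^ 2 * s ^ 2 / 2) :=
            mul_le_mul_of_nonneg_left hmgf h0.le
        _ = Real.exp (-t ^ 2 / 2) := by
            rw [← Real.exp_add]
            congr 1
            field_simp
            ring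
    have := h.trans hb
    rw [ENNReal.le_ofReal_iff_toReal_le (measure_ne_top μ _) (Real.exp_pos _).le]
    exact this
  have hsub : {ω | t ≤ |Y ω| / s} ⊆ {ω | t * s ≤ Y ω} ∪ {ω | t * s ≤ -Y ω} := by
    intro ω hω
    simp only [Set.mem_setOf_eq] at hω
    have : t * s ≤ |Y ω| := by
      rw [le_div_iff₀ hs] at hω
      exact hω
    rcases abs_cases (Y ω) with ⟨he, _⟩ | ⟨he, _⟩
    · left; simp only [Set.mem_setOf_eq]; linarith [he ▸ this]
    · right; simp only [Set.mem_setOf_eq]; linarith [he ▸ this]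
  have hY := hone Y hint hsg
  have hnegint : ∀ l : ℝ, Integrable (fun ω => Real.exp (l * (-Y ω))) μ := by
    intro l; simpa [neg_mul, mul_neg] using hint (-l)
  have hnegsg : ∀ l : ℝ, ∫ ω, Real.exp (l * (-Y ω)) ∂μ ≤ Real.exp (l ^ 2 * s ^ 2 / 2) := by
    intro l
    have := hsg (-l)
    simpa [neg_mul, mul_neg, neg_pow] using this
  have hY' := hone (fun ω => -Y ω) hnegint hnegsg
  calc μ {ω | t ≤ |Y ω| / s} ≤ μ ({ω | t * s ≤ Y ω} ∪ {ω | t * s ≤ -Y ω}) := measure_mono hsub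
    _ ≤ μ {ω | t * s ≤ Y ω} + μ {ω | t * s ≤ -Y ω} := measure_union_le _ _
    _ ≤ ENNReal.ofReal (Real.exp (-t ^ 2 / 2)) + ENNReal.ofReal (Real.exp (-t ^ 2 / 2)) :=
        add_le_add hY hY'
    _ = ENNReal.ofReal (2 * Real.exp (-t ^ 2 / 2)) := by
        rw [← ENNReal.ofReal_add (Real.exp_pos _).le (Real.exp_pos _).le]; congr 1; ring

set_option maxHeartbeats 1000000 in
lemma aux_maximal {Ω : Type*} [MeasurableSpace Ω] (μ : Measure Ω) [IsProbabilityMeasure μ]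
    (n : ℕ) (hn : 1 ≤ n) (f : Ω → ℝ) (hf : Measurable f) (hfnn : ∀ ω, 0 ≤ f ω)
    (Z : Fin n → Ω → ℝ)
    (hcover : ∀ ω, ∃ j, f ω = (Z j ω) ^ 2)
    (htail : ∀ (j : Fin n) (u : ℝ), 0 < u →
      μ {ω | u ≤ |Z j ω|} ≤ ENNReal.ofReal (2 * Real.exp (-u ^ 2 / 2))) :
    ∫⁻ ω, ENNReal.ofReal (f ω) ∂μ ≤ ENNReal.ofReal (2 * Real.log (2 * n) + 2) := by
  have hn1 : (1:ℝ) ≤ (n:ℝ) := by exact_mod_cast hn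
  have h2n : (1:ℝ) < 2 * n := by linarith
  set a : ℝ := 2 * Real.log (2 * n) with ha_def
  have ha : 0 < a := by
    have := Real.log_pos h2n
    positivity
  rw [MeasureTheory.lintegral_eq_lintegral_meas_lt μ (Eventually.of_forall hfnn) hf.aemeasurable]
  have hsplit : Ioi (0:ℝ) = Ioc 0 a ∪ Ioi a := (Ioc_union_Ioi_eq_Ioi ha.le).symm
  rw [hsplit, lintegral_union measurableSet_Ioi (Ioc_disjoint_Ioi le_rfl)]
  have h1 : ∫⁻ t in Ioc (0:ℝ) a, μ {ω | t < f ω} ≤ ENNReal.ofReal a := by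
    calc ∫⁻ t in Ioc (0:ℝ) a, μ {ω | t < f ω} ≤ ∫⁻ _ in Ioc (0:ℝ) a, 1 :=
          lintegral_mono fun t => prob_le_one
      _ = volume (Ioc (0:ℝ) a) := setLIntegral_one _
      _ = ENNReal.ofReal a := by rw [Real.volume_Ioc, sub_zero]
  have h2 : ∫⁻ t in Ioi a, μ {ω | t < f ω} ≤ ENNReal.ofReal 2 := by
    have hb : ∀ t ∈ Ioi a, μ {ω | t < f ω} ≤ ENNReal.ofReal (2 * n * Real.exp (-t / 2)) := by
      intro t htmem
      have ht : 0 < t := ha.trans htmem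
      have hsub : {ω | t < f ω} ⊆ ⋃ j, {ω | Real.sqrt t ≤ |Z j ω|} := by
        intro ω hω
        obtain ⟨j, hj⟩ := hcover ω
        refine Set.mem_iUnion.mpr ⟨j, ?_⟩
        simp only [Set.mem_setOf_eq] at hω ⊢
        rw [hj] at hω
        have := Real.sqrt_lt_sqrt ht.le hω
        rw [Real.sqrt_sq_eq_abs] at this
        exact this.le
      calc μ {ω | t < f ω} ≤ μ (⋃ j, {ω | Real.sqrt t ≤ |Z j ω|}) := measure_mono hsub
        _ ≤ ∑ j, μ {ω | Real.sqrt t ≤ |Z j ω|} := measure_iUnion_fintype_le _ _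
        _ ≤ ∑ _j : Fin n, ENNReal.ofReal (2 * Real.exp (-t / 2)) := by
            refine Finset.sum_le_sum fun j _ => ?_
            have := htail j (Real.sqrt t) (Real.sqrt_pos.mpr ht)
            rwa [Real.sq_sqrt ht.le] at this
        _ = ENNReal.ofReal (2 * n * Real.exp (-t / 2)) := by
            rw [Finset.sum_const, Finset.card_univ, Fintype.card_fin, nsmul_eq_mul,
              ← ENNReal.ofReal_natCast n, ← ENNReal.ofReal_mul (by positivity)]
            congr 1
            ring
    have hmeas : Measurable fun t : ℝ => ENNReal.ofReal (2 * n * Real.exp (-t / 2)) := by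
      fun_prop
    refine (setLIntegral_mono hmeas hb).trans ?_
    have hInt : IntegrableOn (fun t : ℝ => 2 * n * Real.exp (-t / 2)) (Ioi a) volume := by
      have h0 : IntegrableOn (fun x : ℝ => 2 * (n:ℝ) * Real.exp (-(1/2) * x)) (Ioi a) volume :=
        (exp_neg_integrableOn_Ioi a (by norm_num : (0:ℝ) < 1/2)).const_mul (2 * (n:ℝ))
      refine h0.congr_fun ?_ measurableSet_Ioi
      intro x _
      show 2 * (n:ℝ) * Real.exp (-(1/2) * x) = 2 * (n:ℝ) * Real.exp (-x / 2)
      rw [show -(1/2 : ℝ) * x = -x / 2 by ring]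
    rw [← ofReal_integral_eq_lintegral_ofReal hInt
      (Eventually.of_forall fun t => by positivity)]
    have hval : ∫ t in Ioi a, 2 * n * Real.exp (-t / 2) = 2 * n * (2 * Real.exp (-a / 2)) := by
      rw [MeasureTheory.integral_const_mul]
      congr 1
      have hd : ∀ x : ℝ, HasDerivAt (fun t => -2 * Real.exp (-t / 2)) (Real.exp (-x / 2)) x := by
        intro x
        have h1 : HasDerivAt (fun t : ℝ => -t / 2) (-1 / 2 : ℝ) x := by
          simpa using ((hasDerivAt_id x).neg.div_const 2)
        have h2 := h1.exp
        have h3 := h2.const_mul (-2 : ℝ)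
        refine h3.congr_deriv ?_
        ring
      have htend : Tendsto (fun t : ℝ => -2 * Real.exp (-t / 2)) atTop (nhds 0) := by
        have h0 : Tendsto (fun t : ℝ => -t / 2) atTop atBot := by
          have := (tendsto_id (α := ℝ)).const_mul_atTop_of_neg (by norm_num : (-1/2 : ℝ) < 0)
          simpa only [show (fun x : ℝ => -1/2 * id x) = fun t : ℝ => -t/2 from funext fun x => by
            simp [id]; ring] using this
        have := (Real.tendsto_exp_atBot.comp h0).const_mul (-2 : ℝ)
        simpa using this
      have := MeasureTheory.integral_Ioi_of_hasDerivAt_of_tendsto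
        (by fun_prop : Continuous fun t : ℝ => -2 * Real.exp (-t / 2)).continuousWithinAt
        (fun x _ => hd x) (by
          have h0 : IntegrableOn (fun x : ℝ => Real.exp (-(1/2) * x)) (Ioi a) volume :=
            exp_neg_integrableOn_Ioi a (by norm_num : (0:ℝ) < 1/2)
          refine h0.congr_fun ?_ measurableSet_Ioi
          intro x _
          show Real.exp (-(1/2) * x) = Real.exp (-x / 2)
          rw [show -(1/2 : ℝ) * x = -x / 2 by ring]) htend
      rw [this]
      ring
    rw [hval]
    apply ENNReal.ofReal_le_ofReal
    have hea : Real.exp (-a / 2) = (2 * n : ℝ)⁻¹ := by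
      rw [ha_def]
      rw [show -(2 * Real.log (2 * n)) / 2 = -Real.log (2 * n) by ring]
      rw [Real.exp_neg, Real.exp_log (by linarith)]
    rw [hea]
    rw [show 2 * (n:ℝ) * (2 * (2 * (n:ℝ))⁻¹) = 2 * ((2 * n) * (2 * n : ℝ)⁻¹) by ring]
    rw [mul_inv_cancel₀ (by linarith)]
    norm_num
  refine le_trans (add_le_add h1 h2) ?_
  rw [← ENNReal.ofReal_add ha.le (by norm_num)]

set_option maxHeartbeats 1000000 in
/-- For i.i.d. reward vectors `r, r'` with `σ_j`-subgaussian deviations and an index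
`X = g(r)` depending only on `r`:
`E[|r_X − r'_X|] ≤ (1 + sqrt(2 log(2n) + 2))·sqrt(E[σ_X²])`. -/
theorem expectation_abs_diff_iid_random_index
    {Ω : Type*} [MeasurableSpace Ω] (μ : Measure Ω) [IsProbabilityMeasure μ]
    (n : ℕ) (hn : 1 ≤ n)
    (r r' : Ω → Fin n → ℝ) (σ m : Fin n → ℝ)
    (hr : Measurable r) (hr' : Measurable r')
    (hσpos : ∀ j, 0 < σ j)
    (hindep : ProbabilityTheory.IndepFun r r' μ)
    (hiid : Measure.map r μ = Measure.map r' μ)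
    (hm : ∀ j, m j = ∫ ω, r ω j ∂μ)
    (g : (Fin n → ℝ) → Fin n) (hg : Measurable g)
    (hint : ∀ (j : Fin n) (l : ℝ),
      Integrable (fun ω => Real.exp (l * (r ω j - m j))) μ)
    (hsg : ∀ (j : Fin n) (l : ℝ),
      ∫ ω, Real.exp (l * (r ω j - m j)) ∂μ ≤ Real.exp (l ^ 2 * σ j ^ 2 / 2)) :
    ∫ ω, |r ω (g (r ω)) - r' ω (g (r ω))| ∂μ
      ≤ (1 + Real.sqrt (2 * Real.log (2 * n) + 2)) *
          Real.sqrt (∫ ω, (σ (g (r ω))) ^ 2 ∂μ) := by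
  -- measurability toolkit
  have hX : Measurable fun ω => g (r ω) := hg.comp hr
  have heval : Measurable fun p : (Fin n → ℝ) × Fin n => p.1 p.2 := by
    have : (fun p : (Fin n → ℝ) × Fin n => p.1 p.2)
        = fun p => ∑ j, if p.2 = j then p.1 j else 0 := by
      funext p; simp
    rw [this]
    exact Finset.measurable_sum _ fun j _ =>
      Measurable.ite (measurable_snd (measurableSet_singleton j))
        ((measurable_pi_apply j).comp measurable_fst) measurable_const
  have hrX : Measurable fun ω => r ω (g (r ω)) := heval.comp (hr.prodMk hX)
  have hr'X : Measurable fun ω => r' ω (g (r ω)) := heval.comp (hr'.prodMk hX)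
  have hσX : Measurable fun ω => σ (g (r ω)) := (measurable_of_countable σ).comp hX
  have hmXm : Measurable fun ω => m (g (r ω)) := (measurable_of_countable m).comp hX
  set K : ℝ := 2 * Real.log (2 * n) + 2 with hK_def
  have hn1 : (1:ℝ) ≤ (n:ℝ) := by exact_mod_cast hn
  have hK_pos : 0 < K := by
    have := Real.log_pos (by linarith : (1:ℝ) < 2 * n)
    rw [hK_def]; linarith
  -- main ENNReal quantities
  set A : ℝ≥0∞ := ∫⁻ ω, ENNReal.ofReal ((σ (g (r ω))) ^ 2) ∂μ with hA_def
  -- Cauchy-Schwarz step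
  have hCS : ∀ G : Ω → ℝ, Measurable G →
      ∫⁻ ω, ENNReal.ofReal |G ω| ∂μ
        ≤ A ^ (1/2 : ℝ) * (∫⁻ ω, ENNReal.ofReal ((G ω / σ (g (r ω))) ^ 2) ∂μ) ^ (1/2 : ℝ) := by
    intro G hG
    have hrpow : ∀ x : ℝ, 0 ≤ x → (ENNReal.ofReal x) ^ (2:ℝ) = ENNReal.ofReal (x ^ 2) := by
      intro x hx
      rw [show (2:ℝ) = ((2:ℕ):ℝ) by norm_num, ENNReal.rpow_natCast, ← ENNReal.ofReal_pow hx]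
    have hpt : ∀ ω, ENNReal.ofReal |G ω|
        = ENNReal.ofReal (σ (g (r ω))) * ENNReal.ofReal (|G ω| / σ (g (r ω))) := by
      intro ω
      rw [← ENNReal.ofReal_mul (hσpos _).le]
      congr 1
      rw [mul_div_cancel₀ _ (hσpos _).ne']
    have hf1 : AEMeasurable (fun ω => ENNReal.ofReal (σ (g (r ω)))) μ :=
      (ENNReal.measurable_ofReal.comp hσX).aemeasurable
    have hf2 : AEMeasurable (fun ω => ENNReal.ofReal (|G ω| / σ (g (r ω)))) μ :=
      (ENNReal.measurable_ofReal.comp (hG.abs.div hσX)).aemeasurable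
    have hholder := ENNReal.lintegral_mul_le_Lp_mul_Lq μ
      ((Real.holderConjugate_iff_eq_conjExponent one_lt_two).mpr (by norm_num) : Real.HolderConjugate 2 2) hf1 hf2
    calc ∫⁻ ω, ENNReal.ofReal |G ω| ∂μ
        = ∫⁻ ω, ((fun ω => ENNReal.ofReal (σ (g (r ω)))) *
            (fun ω => ENNReal.ofReal (|G ω| / σ (g (r ω))))) ω ∂μ := by
          simp only [Pi.mul_apply]; exact lintegral_congr hpt
      _ ≤ (∫⁻ ω, ENNReal.ofReal (σ (g (r ω))) ^ (2:ℝ) ∂μ) ^ (1/2 : ℝ) *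
          (∫⁻ ω, ENNReal.ofReal (|G ω| / σ (g (r ω))) ^ (2:ℝ) ∂μ) ^ (1/2 : ℝ) := hholder
      _ = A ^ (1/2 : ℝ) * (∫⁻ ω, ENNReal.ofReal ((G ω / σ (g (r ω))) ^ 2) ∂μ) ^ (1/2 : ℝ) := by
          congr 2
          · rw [hA_def]
            apply lintegral_congr
            intro ω
            rw [hrpow _ (hσpos _).le]
          · apply lintegral_congr
            intro ω
            rw [hrpow _ (div_nonneg (abs_nonneg _) (hσpos _).le)]
            congr 1
            rw [div_pow, div_pow, sq_abs]
  -- bound for the first term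
  have hM1 : ∫⁻ ω, ENNReal.ofReal (((r ω (g (r ω)) - m (g (r ω))) / σ (g (r ω))) ^ 2) ∂μ
      ≤ ENNReal.ofReal K := by
    apply aux_maximal μ n hn _ ?_ (fun ω => sq_nonneg _)
      (fun j ω => (r ω j - m j) / σ j)
    · intro ω; exact ⟨g (r ω), rfl⟩
    · intro j u hu
      have h := aux_tail μ (fun ω => r ω j - m j) (σ j) (hσpos j) (hint j) (hsg j) u hu
      have hseteq : {ω | u ≤ |(r ω j - m j) / σ j|} = {ω | u ≤ |r ω j - m j| / σ j} := by
        ext ω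
        simp only [Set.mem_setOf_eq, abs_div, abs_of_pos (hσpos j)]
      show μ {ω | u ≤ |(r ω j - m j) / σ j|} ≤ _
      rw [hseteq]
      exact h
    · exact ((hrX.sub hmXm).div hσX).pow_const 2
  -- bound for the second moment of a single normalized coordinate (shared law)
  have hM2j : ∀ j : Fin n, ∫⁻ ω, ENNReal.ofReal (((r' ω j - m j) / σ j) ^ 2) ∂μ ≤ 1 := by
    intro j
    have hh : Measurable fun x : Fin n → ℝ => ENNReal.ofReal (((x j - m j) / σ j) ^ 2) := by
      fun_prop
    have htrans : ∫⁻ ω, ENNReal.ofReal (((r' ω j - m j) / σ j) ^ 2) ∂μ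
        = ∫⁻ ω, ENNReal.ofReal (((r ω j - m j) / σ j) ^ 2) ∂μ := by
      rw [← lintegral_map hh hr', ← hiid, lintegral_map hh hr]
    rw [htrans]
    exact aux_sq_moment μ (fun ω => r ω j - m j) (σ j) (hσpos j) (hint j) (hsg j)
  -- bound for second term second moment using independence
  have hM2 : ∫⁻ ω, ENNReal.ofReal (((r' ω (g (r ω)) - m (g (r ω))) / σ (g (r ω))) ^ 2) ∂μ
      ≤ 1 := by
    have hdecomp : ∀ ω, ENNReal.ofReal (((r' ω (g (r ω)) - m (g (r ω))) / σ (g (r ω))) ^ 2)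
        = ∑ j, ((g ⁻¹' {j}).indicator (fun _ => (1:ℝ≥0∞)) (r ω)) *
            ENNReal.ofReal (((r' ω j - m j) / σ j) ^ 2) := by
      intro ω
      rw [Finset.sum_eq_single (g (r ω))]
      · rw [Set.indicator_of_mem (by exact rfl) , one_mul]
      · intro j _ hj
        rw [Set.indicator_of_notMem (by exact fun h => hj (h ▸ rfl)), zero_mul]
      · intro h; exact absurd (Finset.mem_univ _) h
    have hterm : ∀ j : Fin n,
        ∫⁻ ω, ((g ⁻¹' {j}).indicator (fun _ => (1:ℝ≥0∞)) (r ω)) *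
            ENNReal.ofReal (((r' ω j - m j) / σ j) ^ 2) ∂μ
          ≤ μ ((fun ω => g (r ω)) ⁻¹' {j}) := by
      intro j
      have hφ : Measurable fun x : Fin n → ℝ =>
          ((g ⁻¹' {j}).indicator (fun _ => (1:ℝ≥0∞)) x) := by
        exact measurable_const.indicator (hg (measurableSet_singleton j))
      have hψ : Measurable fun x : Fin n → ℝ => ENNReal.ofReal (((x j - m j) / σ j) ^ 2) := by
        fun_prop
      have hind := ProbabilityTheory.lintegral_mul_eq_lintegral_mul_lintegral_of_indepFun
        (μ := μ) (hφ.comp hr) (hψ.comp hr') (hindep.comp hφ hψ)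
      calc ∫⁻ ω, _ ∂μ = (∫⁻ ω, ((g ⁻¹' {j}).indicator (fun _ => (1:ℝ≥0∞)) (r ω)) ∂μ)
            * ∫⁻ ω, ENNReal.ofReal (((r' ω j - m j) / σ j) ^ 2) ∂μ := hind
        _ ≤ μ ((fun ω => g (r ω)) ⁻¹' {j}) * 1 := by
            apply mul_le_mul' (le_of_eq ?_) (hM2j j)
            have : ∀ ω, ((g ⁻¹' {j}).indicator (fun _ => (1:ℝ≥0∞)) (r ω))
                = (r ⁻¹' (g ⁻¹' {j})).indicator (fun _ => (1:ℝ≥0∞)) ω := by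
              intro ω
              exact (Set.indicator_comp_right r (g := fun _ => (1:ℝ≥0∞))).symm
            rw [lintegral_congr this, lintegral_indicator (hr (hg (measurableSet_singleton j)))]
            simp only [lintegral_const, Measure.restrict_apply, MeasurableSet.univ, univ_inter, one_mul]
            rfl
        _ = μ ((fun ω => g (r ω)) ⁻¹' {j}) := mul_one _
    calc ∫⁻ ω, ENNReal.ofReal (((r' ω (g (r ω)) - m (g (r ω))) / σ (g (r ω))) ^ 2) ∂μ
        = ∑ j, ∫⁻ ω, ((g ⁻¹' {j}).indicator (fun _ => (1:ℝ≥0∞)) (r ω)) *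
            ENNReal.ofReal (((r' ω j - m j) / σ j) ^ 2) ∂μ := by
          rw [← lintegral_finset_sum]
          · exact lintegral_congr hdecomp
          · intro j _
            refine Measurable.mul ?_ ?_
            · exact (measurable_const.indicator (hg (measurableSet_singleton j))).comp hr
            · fun_prop
      _ ≤ ∑ j, μ ((fun ω => g (r ω)) ⁻¹' {j}) := Finset.sum_le_sum fun j _ => hterm j
      _ = μ ((fun ω => g (r ω)) ⁻¹' (Finset.univ : Finset (Fin n))) :=
          MeasureTheory.sum_measure_preimage_singleton _ fun j _ => hX (measurableSet_singleton j)
      _ = 1 := by rw [Finset.coe_univ, Set.preimage_univ, measure_univ]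
  -- combine in ENNReal
  have hA_fin : A ≠ ⊤ := by
    have hbound : ∀ ω, ENNReal.ofReal ((σ (g (r ω))) ^ 2) ≤ ENNReal.ofReal (∑ j, σ j ^ 2) := by
      intro ω
      apply ENNReal.ofReal_le_ofReal
      exact Finset.single_le_sum (fun j _ => sq_nonneg (σ j)) (Finset.mem_univ _)
    have hmono : ∫⁻ ω, ENNReal.ofReal ((σ (g (r ω))) ^ 2) ∂μ
        ≤ ∫⁻ _ω, ENNReal.ofReal (∑ j, σ j ^ 2) ∂μ := lintegral_mono hbound
    rw [lintegral_const, measure_univ, mul_one] at hmono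
    exact (hmono.trans_lt ENNReal.ofReal_lt_top).ne
  have hT : ∫⁻ ω, ENNReal.ofReal |r ω (g (r ω)) - r' ω (g (r ω))| ∂μ
      ≤ A ^ (1/2 : ℝ) * (ENNReal.ofReal (Real.sqrt K) + 1) := by
    have hsplit : ∫⁻ ω, ENNReal.ofReal |r ω (g (r ω)) - r' ω (g (r ω))| ∂μ
        ≤ ∫⁻ ω, ENNReal.ofReal |r ω (g (r ω)) - m (g (r ω))| ∂μ
          + ∫⁻ ω, ENNReal.ofReal |r' ω (g (r ω)) - m (g (r ω))| ∂μ := by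
      rw [← lintegral_add_left ((show Measurable fun ω => r ω (g (r ω)) - m (g (r ω)) from hrX.sub hmXm).abs.ennreal_ofReal)]
      apply lintegral_mono
      intro ω
      calc ENNReal.ofReal |r ω (g (r ω)) - r' ω (g (r ω))|
          ≤ ENNReal.ofReal (|r ω (g (r ω)) - m (g (r ω))| + |r' ω (g (r ω)) - m (g (r ω))|) := by
            apply ENNReal.ofReal_le_ofReal
            have := abs_sub_le (r ω (g (r ω))) (m (g (r ω))) (r' ω (g (r ω)))
            rwa [abs_sub_comm (m (g (r ω)))] at this
        _ ≤ _ := ENNReal.ofReal_add_le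
    have h1 := (hCS _ (hrX.sub hmXm)).trans
      (mul_le_mul_right (ENNReal.rpow_le_rpow hM1 (by norm_num)) _)
    have h2 := (hCS _ (hr'X.sub hmXm)).trans
      (mul_le_mul_right (ENNReal.rpow_le_rpow hM2 (by norm_num)) _)
    rw [ENNReal.one_rpow] at h2
    rw [ENNReal.ofReal_rpow_of_nonneg hK_pos.le (by norm_num), ← Real.sqrt_eq_rpow] at h1
    calc ∫⁻ ω, ENNReal.ofReal |r ω (g (r ω)) - r' ω (g (r ω))| ∂μ
        ≤ _ := hsplit
      _ ≤ A ^ (1/2 : ℝ) * ENNReal.ofReal (Real.sqrt K) + A ^ (1/2 : ℝ) * 1 := by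
          exact add_le_add h1 (by simpa using h2)
      _ = A ^ (1/2 : ℝ) * (ENNReal.ofReal (Real.sqrt K) + 1) := by rw [mul_add]
  -- convert to real
  have hσ2int : Integrable (fun ω => (σ (g (r ω))) ^ 2) μ := by
    refine (integrable_const (∑ j, σ j ^ 2)).mono' (hσX.pow_const 2).aestronglyMeasurable ?_
    exact Eventually.of_forall fun ω => by
      rw [Real.norm_eq_abs, abs_of_nonneg (sq_nonneg _)]
      exact Finset.single_le_sum (fun j _ => sq_nonneg (σ j)) (Finset.mem_univ _)
  have hA_eq : ENNReal.ofReal (∫ ω, (σ (g (r ω))) ^ 2 ∂μ) = A :=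
    ofReal_integral_eq_lintegral_ofReal hσ2int (Eventually.of_forall fun ω => sq_nonneg _)
  have hI_nn : 0 ≤ ∫ ω, (σ (g (r ω))) ^ 2 ∂μ := integral_nonneg fun ω => sq_nonneg _
  have hfinal : ∫⁻ ω, ENNReal.ofReal |r ω (g (r ω)) - r' ω (g (r ω))| ∂μ
      ≤ ENNReal.ofReal ((1 + Real.sqrt K) * Real.sqrt (∫ ω, (σ (g (r ω))) ^ 2 ∂μ)) := by
    refine hT.trans (le_of_eq ?_)
    rw [ENNReal.ofReal_mul (by positivity : (0:ℝ) ≤ 1 + Real.sqrt K),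
      ENNReal.ofReal_add (by norm_num : (0:ℝ) ≤ 1) (Real.sqrt_nonneg K), ENNReal.ofReal_one,
      Real.sqrt_eq_rpow (∫ ω, (σ (g (r ω))) ^ 2 ∂μ),
      ← ENNReal.ofReal_rpow_of_nonneg hI_nn (by norm_num : (0:ℝ) ≤ 1/2), hA_eq]
    ring
  -- conclude
  have hLHS : ∫ ω, |r ω (g (r ω)) - r' ω (g (r ω))| ∂μ
      ≤ (∫⁻ ω, ENNReal.ofReal |r ω (g (r ω)) - r' ω (g (r ω))| ∂μ).toReal := by
    by_cases hFi : Integrable (fun ω => |r ω (g (r ω)) - r' ω (g (r ω))|) μ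
    · rw [integral_eq_lintegral_of_nonneg_ae (Eventually.of_forall fun ω => abs_nonneg _)
        hFi.aestronglyMeasurable]
    · rw [integral_undef hFi]
      exact ENNReal.toReal_nonneg
  refine hLHS.trans ?_
  calc (∫⁻ ω, ENNReal.ofReal |r ω (g (r ω)) - r' ω (g (r ω))| ∂μ).toReal
      ≤ (ENNReal.ofReal ((1 + Real.sqrt K) * Real.sqrt (∫ ω, (σ (g (r ω))) ^ 2 ∂μ))).toReal :=
        ENNReal.toReal_mono ENNReal.ofReal_ne_top hfinal
    _ = (1 + Real.sqrt K) * Real.sqrt (∫ ω, (σ (g (r ω))) ^ 2 ∂μ) := by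
        rw [ENNReal.toReal_ofReal (by positivity)]
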